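/- Let G be a finite group with generating set S containing an element s of order 2. Then Player 1 has a winning strategy for RAV(G,S), namely to always play the generator s. -/

import Mathlib

namespace RelatorGames

variable {G : Type*} [Group G]

/-- The letters available in the relator games: elements of `S` and their inverses. -/
def letters (S : Set G) : Set G := S ∪ (fun g => g⁻¹) '' S

/-- Evaluate a history of moves (most recent letter first) to a group element:
the group element represented by the word built so far. -/
def eval (h : List G) : G := h.reverse.prod

/-- A move `m` is legal after history `h`: it is a letter of `S ∪ S⁻¹` and it is not
the inverse of the immediately preceding letter (no backtracking). -/
def LegalMove (S : Set G) (h : List G) (m : G) : Prop :=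
  m ∈ letters S ∧ ∀ p ∈ h.head?, m ≠ p⁻¹

/-- Appending `m` to the history `h` produces a word equal in `G` to some earlier
prefix of the word (equivalently, the walk in the Cayley graph revisits a vertex). -/
def ClosesCycle (h : List G) (m : G) : Prop :=
  ∃ t, t <:+ h ∧ eval t = eval (m :: h)

/-- A strategy: a choice of next letter given the history (most recent letter first). -/
abbrev Strategy (G : Type*) := List G → G

/-- The sequence of histories arising when the first player (moving at even steps)
uses `σ` and the second player (moving at odd steps) uses `τ`. -/
def hist (σ τ : Strategy G) : ℕ → List G
  | 0 => []
  | k + 1 =>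
      (if k % 2 = 0 then σ (hist σ τ k) else τ (hist σ τ k)) :: hist σ τ k

/-- The move made at step `k` in the play of `σ` against `τ`. -/
def moveAt (σ τ : Strategy G) (k : ℕ) : G :=
  if k % 2 = 0 then σ (hist σ τ k) else τ (hist σ τ k)

/-- Step `j` is uneventful: the move made is legal and does not close a cycle. -/
def Ok (S : Set G) (σ τ : Strategy G) (j : ℕ) : Prop :=
  LegalMove S (hist σ τ j) (moveAt σ τ j) ∧ ¬ ClosesCycle (hist σ τ j) (moveAt σ τ j)

/-- In the play of `σ` against `τ`, the player moving at steps congruent to `p` mod 2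
wins the relator achievement game `REL(G,S)`: at the first eventful step, either it is
that player's turn and they legally close a cycle, or it is the opponent's turn and the
opponent has made an illegal move (in particular, has no legal move). -/
def RelWins (S : Set G) (p : ℕ) (σ τ : Strategy G) : Prop :=
  ∃ k : ℕ, (∀ j < k, Ok S σ τ j) ∧
    ((k % 2 = p ∧ LegalMove S (hist σ τ k) (moveAt σ τ k) ∧
        ClosesCycle (hist σ τ k) (moveAt σ τ k)) ∨
      (k % 2 ≠ p ∧ ¬ LegalMove S (hist σ τ k) (moveAt σ τ k)))

/-- In the play of `σ` against `τ`, the player moving at steps congruent to `p` mod 2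
wins the relator avoidance game `RAV(G,S)`: at the first eventful step it is the
opponent's turn, and the opponent either makes an illegal move (in particular, has no
legal move) or closes a cycle. -/
def RavWins (S : Set G) (p : ℕ) (σ τ : Strategy G) : Prop :=
  ∃ k : ℕ, (∀ j < k, Ok S σ τ j) ∧ k % 2 ≠ p ∧
    (¬ LegalMove S (hist σ τ k) (moveAt σ τ k) ∨ ClosesCycle (hist σ τ k) (moveAt σ τ k))

/-- Player 1 has a winning strategy for `REL(G,S)`. -/
def FirstWinsREL (S : Set G) : Prop :=
  ∃ σ : Strategy G, ∀ τ : Strategy G, RelWins S 0 σ τ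

/-- Player 2 has a winning strategy for `REL(G,S)`. -/
def SecondWinsREL (S : Set G) : Prop :=
  ∃ τ : Strategy G, ∀ σ : Strategy G, RelWins S 1 σ τ

/-- Player 1 has a winning strategy for `RAV(G,S)`. -/
def FirstWinsRAV (S : Set G) : Prop :=
  ∃ σ : Strategy G, ∀ τ : Strategy G, RavWins S 0 σ τ

/-- Player 2 has a winning strategy for `RAV(G,S)`. -/
def SecondWinsRAV (S : Set G) : Prop :=
  ∃ τ : Strategy G, ∀ σ : Strategy G, RavWins S 1 σ τ

lemma hist_succ (σ τ : Strategy G) (k : ℕ) :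
    hist σ τ (k + 1) = moveAt σ τ k :: hist σ τ k := rfl

lemma eval_cons (m : G) (h : List G) : eval (m :: h) = eval h * m := by
  simp [eval]

lemma hist_suffix (σ τ : Strategy G) {i j : ℕ} (hij : i ≤ j) :
    hist σ τ i <:+ hist σ τ j := by
  induction j with
  | zero =>
    have : i = 0 := Nat.le_zero.mp hij
    subst this; exact List.suffix_refl _
  | succ j ih =>
    rcases Nat.lt_or_ge i (j + 1) with h | h
    · exact (ih (Nat.lt_succ_iff.mp h)).trans
        (by rw [hist_succ]; exact List.suffix_cons _ _)
    · have : i = j + 1 := le_antisymm hij h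
      subst this; exact List.suffix_refl _

lemma suffix_hist (σ τ : Strategy G) {k : ℕ} {t : List G} (ht : t <:+ hist σ τ k) :
    ∃ i ≤ k, t = hist σ τ i := by
  induction k with
  | zero =>
    refine ⟨0, le_refl _, ?_⟩
    have : t <:+ ([] : List G) := ht
    simpa [hist] using this
  | succ k ih =>
    rw [hist_succ] at ht
    rcases List.suffix_cons_iff.mp ht with h | h
    · exact ⟨k + 1, le_refl _, by rw [h, hist_succ]⟩
    · obtain ⟨i, hi, rfl⟩ := ih h
      exact ⟨i, hi.trans (Nat.le_succ _), rfl⟩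

end RelatorGames

open RelatorGames in
/-- If a generating set `S` of a finite group `G` contains an element
`s` of order 2, then Player 1 wins `RAV(G,S)` by always playing `s`. -/
theorem rav_order_two_generator_first_wins {G : Type*} [Group G] [Finite G]
    (S : Set G) (hgen : Subgroup.closure S = ⊤)
    (s : G) (hs : s ∈ S) (hord : orderOf s = 2) :
    ∀ τ : Strategy G, RavWins S 0 (fun _ => s) τ := by
  classical
  intro τ
  set σ : Strategy G := fun _ => s with hσ
  have hss : s * s = 1 := by
    have h := pow_orderOf_eq_one s
    rwa [hord, pow_two] at h
  have hs1 : s ≠ 1 := by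
    intro h; rw [h, orderOf_one] at hord; omega
  have hsinv : s⁻¹ = s := inv_eq_of_mul_eq_one_right hss
  have hmove_even : ∀ k, k % 2 = 0 → moveAt σ τ k = s := by
    intro k hk; simp [moveAt, hk, hσ]
  set v : ℕ → G := fun k => eval (hist σ τ k) with hv
  have hv_succ : ∀ k, v (k + 1) = v k * moveAt σ τ k := by
    intro k; rw [hv]; simp only [hist_succ, eval_cons]
  -- distinctness of visited vertices as long as everything is Ok
  have distinct : ∀ K, (∀ j < K, Ok S σ τ j) → ∀ i j, i < j → j ≤ K → v i ≠ v j := by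
    intro K hOk i j hij hjK heq
    obtain ⟨j, rfl⟩ : ∃ j', j = j' + 1 := ⟨j - 1, by omega⟩
    refine (hOk j (by omega)).2 ⟨hist σ τ i, hist_suffix σ τ (by omega), ?_⟩
    show eval (hist σ τ i) = eval (hist σ τ (j + 1))
    exact heq
  -- Player 1's move is always fine
  have p1ok : ∀ k, k % 2 = 0 → (∀ j < k, Ok S σ τ j) → Ok S σ τ k := by
    intro k hk hOk
    have hmk : moveAt σ τ k = s := hmove_even k hk
    constructor
    · refine ⟨Or.inl (hmk ▸ hs), ?_⟩
      intro p hp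
      rcases Nat.eq_zero_or_pos k with rfl | hkpos
      · simp [hist] at hp
      · obtain ⟨j, rfl⟩ : ∃ j, k = j + 1 := ⟨k - 1, by omega⟩
        rw [hist_succ] at hp
        simp only [List.head?_cons, Option.mem_some_iff] at hp
        subst hp
        obtain ⟨i, rfl⟩ : ∃ i, j = i + 1 := ⟨j - 1, by omega⟩
        have hleg := (hOk (i + 1) (by omega)).1.2
        have hhead : (hist σ τ (i + 1)).head? = some (moveAt σ τ i) := by
          rw [hist_succ]; rfl
        have hne := hleg (moveAt σ τ i) (by rw [hhead]; rfl)
        rw [hmove_even i (by omega), hsinv] at hne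
        rw [hmk]
        intro h
        exact hne (by rw [← inv_inv (moveAt σ τ (i + 1)), ← h, hsinv])
    · rintro ⟨t, hts, hte⟩
      obtain ⟨i, hik, rfl⟩ := suffix_hist σ τ hts
      have hvk : v i = v k * s := by
        rw [hv]; simp only []
        rw [hte, eval_cons, hmk]
      rcases Nat.lt_or_ge i k with hik' | hik'
      · rcases Nat.even_or_odd i with he | ho
        · have hie : i % 2 = 0 := Nat.even_iff.mp he
          have hv1 : v (i + 1) = v k := by
            rw [hv_succ, hmove_even i hie, hvk, mul_assoc, hss, mul_one]
          have : i + 1 < k := by omega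
          exact distinct k hOk (i + 1) k this le_rfl hv1
        · have hio : i % 2 = 1 := Nat.odd_iff.mp ho
          obtain ⟨i', rfl⟩ : ∃ i', i = i' + 1 := ⟨i - 1, by omega⟩
          have hv1 : v i' = v k := by
            have := hv_succ i'
            rw [hmove_even i' (by omega), hvk] at this
            have h2 : v i' * s * s = v k * s * s := by rw [← this]
            rwa [mul_assoc, hss, mul_one, mul_assoc, hss, mul_one] at h2
          exact distinct k hOk i' k (by omega) le_rfl hv1
      · have : i = k := le_antisymm hik hik'
        subst this
        have : s = 1 := by
          have := hvk
          nth_rewrite 1 [← mul_one (v i)] at this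
          exact (mul_left_cancel this).symm
        exact hs1 this
  -- some step must fail, by finiteness
  have hex : ∃ k, ¬ Ok S σ τ k := by
    by_contra hc
    push_neg at hc
    have hinj : Function.Injective v := by
      intro a b hab
      by_contra hne
      rcases Nat.lt_or_ge a b with h | h
      · exact distinct b (fun j _ => hc j) a b h le_rfl hab
      · exact distinct a (fun j _ => hc j) b a (by omega) le_rfl hab.symm
    obtain ⟨a, b, hne, heq⟩ := Finite.exists_ne_map_eq_of_infinite v
    exact hne (hinj heq)
  have hk : ¬ Ok S σ τ (Nat.find hex) := Nat.find_spec hex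
  have hlt : ∀ j < Nat.find hex, Ok S σ τ j := fun j hj =>
    not_not.mp (Nat.find_min hex hj)
  have hodd : Nat.find hex % 2 ≠ 0 := fun h => hk (p1ok _ h hlt)
  refine ⟨Nat.find hex, hlt, hodd, ?_⟩
  rcases not_and_or.mp hk with h | h
  · exact Or.inl h
  · exact Or.inr (not_not.mp h)
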